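/- Let X = U ∪ V with U, V open, W = U ∩ V, and suppose U and V are path-connected while W has at least three path-components; assume the pairs (U,J), (V,J), (W,J) are connected where J meets each path-component of W in exactly one point. Then the fundamental group of X contains a free group of rank 2 as a retract; in particular π₁(X) is nonabelian. -/

import Mathlib

set_option linter.unusedSectionVars false

namespace VKWord

variable {G : Type*} [Group G]

/-- ordered product of "letters" of a labeled subdivision. -/
def pword (d : ℕ → G) (L : ℕ → Bool) (n : ℕ) : G :=
  ((List.range n).map (fun i => if L i then 1 else d i * (d (i + 1))⁻¹)).prod

@[simp] lemma pword_zero (d : ℕ → G) (L : ℕ → Bool) : pword d L 0 = 1 := rfl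

lemma pword_succ (d : ℕ → G) (L : ℕ → Bool) (n : ℕ) :
    pword d L (n + 1) = pword d L n * (if L n then 1 else d n * (d (n + 1))⁻¹) := by
  rw [pword, List.range_succ, List.map_append, List.prod_append]
  simp [pword]

lemma pword_succ_left (d : ℕ → G) (L : ℕ → Bool) (n : ℕ) :
    pword d L (n + 1) = (if L 0 then 1 else d 0 * (d 1)⁻¹) *
      pword (fun i => d (i + 1)) (fun i => L (i + 1)) n := by
  rw [pword, List.range_succ_eq_map, List.map_cons, List.prod_cons, List.map_map]
  rfl

lemma pword_add (d : ℕ → G) (L : ℕ → Bool) (n m : ℕ) :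
    pword d L (n + m) = pword d L n *
      pword (fun i => d (n + i)) (fun i => L (n + i)) m := by
  rw [pword, List.range_add, List.map_append, List.prod_append, List.map_map]
  rfl

lemma pword_congr {d e : ℕ → G} {L L' : ℕ → Bool} {n : ℕ}
    (hd : ∀ i ≤ n, d i = e i) (hL : ∀ i < n, L i = L' i) :
    pword d L n = pword e L' n := by
  induction n with
  | zero => rfl
  | succ k ih =>
    rw [pword_succ, pword_succ, ih (fun i hi => hd i (hi.trans k.le_succ))
      (fun i hi => hL i (hi.trans k.lt_succ_self)),
      hL k k.lt_succ_self, hd k k.le_succ, hd (k+1) le_rfl]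
  -- fix: k.le_succ.le wrong; adjust below

lemma pword_eq_one {d : ℕ → G} {L : ℕ → Bool} {n : ℕ}
    (h : ∀ i < n, L i = false → d i = d (i + 1)) : pword d L n = 1 := by
  induction n with
  | zero => rfl
  | succ k ih =>
    rw [pword_succ, ih (fun i hi => h i (hi.trans k.lt_succ_self))]
    rcases hLk : L k with _ | _
    · rw [h k k.lt_succ_self hLk]; simp
    · simp

/-- Main algebraic invariance: two rows with same labels, agreeing endpoints and agreeing
at label-transition points, have the same word. -/
lemma pword_invar (d e : ℕ → G) (L : ℕ → Bool) (n : ℕ)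
    (h0 : d 0 = e 0) (hn : d n = e n)
    (hint : ∀ i, 0 < i → i < n → L (i - 1) ≠ L i → d i = e i) :
    pword d L n = pword e L n := by
  have key : ∀ k ≤ n, pword d L k * (if k < n ∧ L k = false then d k else 1)
      = pword e L k * (if k < n ∧ L k = false then e k else 1) := by
    intro k hk
    induction k with
    | zero =>
      simp only [pword_zero, one_mul]
      split_ifs with hc
      · exact h0
      · rfl
    | succ k ih =>
      have hkn : k < n := lt_of_lt_of_le (Nat.lt_succ_self k) hk
      have ih' := ih hkn.le
      rcases hLk : L k with _ | _
      · -- L k = false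
        rw [if_pos ⟨hkn, hLk⟩, if_pos ⟨hkn, hLk⟩] at ih'
        rw [pword_succ d L k, pword_succ e L k]
        simp only [hLk, Bool.false_eq_true, if_false]
        by_cases hc : k + 1 < n ∧ L (k + 1) = false
        · rw [if_pos hc, if_pos hc]
          calc pword d L k * (d k * (d (k+1))⁻¹) * d (k+1)
              = pword d L k * d k := by group
            _ = pword e L k * e k := ih'
            _ = pword e L k * (e k * (e (k+1))⁻¹) * e (k+1) := by group
        · have hd1 : d (k + 1) = e (k + 1) := by
            rcases Nat.lt_or_ge (k+1) n with h1 | h1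
            · have : L (k + 1) = true := by
                rcases h2 : L (k+1) with _|_
                · exact absurd ⟨h1, h2⟩ hc
                · rfl
              exact hint (k+1) k.succ_pos h1 (by simp [hLk, this])
            · have : k + 1 = n := le_antisymm hk h1
              rw [this]; exact hn
          rw [if_neg hc, if_neg hc, mul_one, mul_one]
          calc pword d L k * (d k * (d (k+1))⁻¹)
              = pword d L k * d k * (d (k+1))⁻¹ := by group
            _ = pword e L k * e k * (e (k+1))⁻¹ := by rw [ih', hd1]
            _ = pword e L k * (e k * (e (k+1))⁻¹) := by group
      · -- L k = true
        rw [if_neg (by simp [hLk]), if_neg (by simp [hLk]), mul_one, mul_one] at ih'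
        rw [pword_succ d L k, pword_succ e L k]
        simp only [hLk, if_true, mul_one]
        by_cases hc : k + 1 < n ∧ L (k + 1) = false
        · have hd1 : d (k + 1) = e (k + 1) :=
            hint (k+1) k.succ_pos hc.1 (by simp [hLk, hc.2])
          rw [if_pos hc, if_pos hc, ih', hd1]
        · rw [if_neg hc, if_neg hc, mul_one, mul_one]; exact ih'
  have := key n le_rfl
  simpa using this



variable {X : Type*} [TopologicalSpace X]


/-- The set labeled by a boolean. -/
def lab (U V : Set X) (b : Bool) : Set X := bif b then U else V

structure Adm (U V : Set X) (f : ℝ → X) (A B : ℝ) (t : ℕ → ℝ) (L : ℕ → Bool) (n : ℕ) :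
    Prop where
  t0 : t 0 = A
  tn : t n = B
  mono : ∀ i, i < n → t i ≤ t (i + 1)
  mem : ∀ i, i < n → ∀ x ∈ Set.Icc (t i) (t (i + 1)), f x ∈ lab U V (L i)

namespace Adm

variable {U V : Set X} {f : ℝ → X} {A B : ℝ} {t : ℕ → ℝ} {L : ℕ → Bool} {n : ℕ}

lemma t_mono (h : Adm U V f A B t L n) : ∀ i j, i ≤ j → j ≤ n → t i ≤ t j := by
  intro i j hij hjn
  induction j with
  | zero => simp [Nat.le_zero.mp hij]
  | succ k ih =>
    rcases Nat.lt_or_ge i (k+1) with h1 | h1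
    · exact (ih (Nat.lt_succ_iff.mp h1) (le_trans k.le_succ hjn)).trans
        (h.mono k (Nat.lt_of_lt_of_le (Nat.lt_succ_self k) hjn))
    · have : i = k + 1 := le_antisymm hij h1
      simp [this]

lemma t_mem_Icc (h : Adm U V f A B t L n) {i : ℕ} (hi : i ≤ n) : t i ∈ Set.Icc A B := by
  constructor
  · rw [← h.t0]; exact h.t_mono 0 i (Nat.zero_le _) hi
  · rw [← h.tn]; exact h.t_mono i n hi le_rfl

end Adm

/-- The word of a labeled subdivision of `f` on `[A,B]`. -/
def wrd (τ : X → G) (f : ℝ → X) (t : ℕ → ℝ) (L : ℕ → Bool) (n : ℕ) : G :=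
  pword (fun i => τ (f (t i))) L n

lemma joinedIn_of_icc {f : ℝ → X} (hf : Continuous f) {l r : ℝ} (hlr : l ≤ r)
    {E : Set X} (h : ∀ x ∈ Set.Icc l r, f x ∈ E) : JoinedIn E (f l) (f r) := by
  refine ⟨⟨⟨fun u : unitInterval => f (l + (r - l) * u), by fun_prop⟩, by simp, by simp⟩, ?_⟩
  intro u
  refine h _ ⟨?_, ?_⟩
  · have : 0 ≤ (r - l) * (u : ℝ) := mul_nonneg (by linarith) u.2.1
    linarith
  · have : (r - l) * (u : ℝ) ≤ (r - l) * 1 :=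
      mul_le_mul_of_nonneg_left u.2.2 (by linarith)
    linarith


section Unique

variable {U V : Set X} {τ : X → G} {f : ℝ → X}

lemma mem_lab_both {x : X} {b b' : Bool} (hb : x ∈ lab U V b) (hb' : x ∈ lab U V b')
    (hne : b ≠ b') : x ∈ U ∩ V := by
  cases b <;> cases b' <;> simp_all [lab]

lemma wrd_degenerate {A : ℝ} {t : ℕ → ℝ} {L : ℕ → Bool} {n : ℕ}
    (h : Adm U V f A A t L n) : wrd τ f t L n = 1 := by
  apply pword_eq_one
  intro i hi _
  have h1 := h.t_mem_Icc hi.le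
  have h2 := h.t_mem_Icc hi
  have e1 : t i = A := le_antisymm h1.2 h1.1
  have e2 : t (i + 1) = A := le_antisymm h2.2 h2.1
  rw [e1, e2]

/-- Any two admissible schemes for `f` on `[A,B]` give the same word. -/
lemma wrd_unique (hτ : ∀ x y : X, JoinedIn (U ∩ V) x y → τ x = τ y)
    (hf : Continuous f) :
    ∀ N A B n m (t : ℕ → ℝ) (L : ℕ → Bool) (t' : ℕ → ℝ) (L' : ℕ → Bool),
      n + m = N → Adm U V f A B t L n → Adm U V f A B t' L' m →
      wrd τ f t L n = wrd τ f t' L' m := by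
  intro N
  induction N using Nat.strong_induction_on with
  | _ N IH =>
    intro A B n m t L t' L' hN h1 h2
    rcases n with _ | k
    · have hAB : A = B := h1.t0 ▸ h1.tn
      rw [show wrd τ f t L 0 = 1 from rfl, wrd_degenerate (hAB ▸ h2)]
    rcases m with _ | l
    · have hAB : A = B := h2.t0 ▸ h2.tn
      rw [show wrd τ f t' L' 0 = 1 from rfl, wrd_degenerate (hAB ▸ h1)]
    -- both at least one interval
    have main : ∀ A B k l (t : ℕ → ℝ) (L : ℕ → Bool) (t' : ℕ → ℝ) (L' : ℕ → Bool),
        (k + 1) + (l + 1) = N → t 1 ≤ t' 1 →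
        Adm U V f A B t L (k+1) → Adm U V f A B t' L' (l+1) →
        wrd τ f t L (k+1) = wrd τ f t' L' (l+1) := by
      clear hN h1 h2 t L t' L' k l A B
      intro A B k l t L t' L' hN hle h1 h2
      set s : ℝ := t 1 with hs
      have hAs : A ≤ s := h1.t0 ▸ h1.mono 0 k.succ_pos
      have hst' : s ≤ t' 1 := hle
      have hAt' : A = t' 0 := h2.t0.symm
      -- f on [A, s] lands in lab (L 0) and in lab (L' 0)
      have hmem1 : ∀ x ∈ Set.Icc A s, f x ∈ lab U V (L 0) := by
        intro x hx
        have := h1.mem 0 k.succ_pos x (by rw [h1.t0]; exact hx)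
        exact this
      have hmem2 : ∀ x ∈ Set.Icc A s, f x ∈ lab U V (L' 0) := by
        intro x hx
        refine h2.mem 0 l.succ_pos x ?_
        rw [← hAt'] at *
        exact ⟨hx.1, hx.2.trans hst'⟩
      -- the first-letter comparison
      have hflip : L 0 ≠ L' 0 → τ (f A) = τ (f s) := by
        intro hne
        refine hτ _ _ (joinedIn_of_icc hf hAs ?_)
        intro x hx
        exact mem_lab_both (hmem1 x hx) (hmem2 x hx) hne
      -- new schemes on [s, B]
      have hT : Adm U V f s B (fun i => t (i + 1)) (fun i => L (i + 1)) k :=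
        ⟨rfl, h1.tn, fun i hi => h1.mono (i+1) (by omega),
          fun i hi x hx => h1.mem (i+1) (by omega) x hx⟩
      have hT' : Adm U V f s B (fun i => if i = 0 then s else t' i) L' (l + 1) := by
        refine ⟨by simp, by simp [h2.tn], ?_, ?_⟩
        · intro i hi
          rcases i with _ | j
          · simpa using hst'
          · simpa using h2.mono (j+1) (by omega)
        · intro i hi x hx
          rcases i with _ | j
          · simp only [if_pos rfl, if_neg one_ne_zero] at hx
            refine h2.mem 0 l.succ_pos x ?_
            rw [← hAt']
            exact ⟨hAs.trans hx.1, hx.2⟩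
          · simp only [if_neg (Nat.succ_ne_zero j), if_neg (Nat.succ_ne_zero (j+1))] at hx
            exact h2.mem (j+1) (by omega) x hx
      have hIH := IH (k + (l+1)) (by omega) s B k (l+1) _ _ _ _ rfl hT hT'
      -- expand both words
      have e1 : wrd τ f t L (k+1) =
          (if L 0 then 1 else τ (f (t 0)) * (τ (f (t 1)))⁻¹) *
            wrd τ f (fun i => t (i + 1)) (fun i => L (i + 1)) k :=
        pword_succ_left _ _ _
      have e2 : wrd τ f t' L' (l+1) =
          (if L' 0 then 1 else τ (f (t' 0)) * (τ (f (t' 1)))⁻¹) *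
            wrd τ f (fun i => t' (i + 1)) (fun i => L' (i + 1)) l :=
        pword_succ_left _ _ _
      have e3 : wrd τ f (fun i => if i = 0 then s else t' i) L' (l+1) =
          (if L' 0 then 1 else τ (f s) * (τ (f (t' 1)))⁻¹) *
            wrd τ f (fun i => t' (i + 1)) (fun i => L' (i + 1)) l := by
        rw [wrd, pword_succ_left]
        simp only [if_pos rfl, if_neg one_ne_zero]
        congr 1
      rw [e1, e2, hIH, e3, ← mul_assoc]
      congr 1
      -- compare first letters: c'0 = c0 * c''0
      rw [h1.t0, ← hAt', ← hs]
      rcases hL0 : L 0 with _ | _ <;> rcases hL0' : L' 0 with _ | _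
      · -- both false (V)
        simp only [Bool.false_eq_true, if_false]; group
      · -- L 0 = false, L' 0 = true
        have := hflip (by simp [hL0, hL0'])
        simp only [Bool.false_eq_true, if_false, if_true, this]; group
      · -- L 0 = true, L' 0 = false
        have := hflip (by simp [hL0, hL0'])
        simp only [Bool.false_eq_true, if_false, if_true, this]; group
      · simp
    rcases le_total (t 1) (t' 1) with hle | hle
    · exact main A B k l t L t' L' hN hle h1 h2
    · exact (main A B l k t' L' t L (by omega) hle h2 h1).symm

end Unique

section WordDef

variable (U V : Set X) (τ : X → G)

open Classical in
/-- The canonical word of `f` on `[A,B]`. -/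
noncomputable def Word (f : ℝ → X) (A B : ℝ) : G :=
  if h : ∃ q : (ℕ → ℝ) × (ℕ → Bool) × ℕ, Adm U V f A B q.1 q.2.1 q.2.2 then
    wrd τ f h.choose.1 h.choose.2.1 h.choose.2.2
  else 1

variable {U V τ}
variable {f : ℝ → X} {A B : ℝ}

lemma Word_eq (hτ : ∀ x y : X, JoinedIn (U ∩ V) x y → τ x = τ y) (hf : Continuous f)
    {t : ℕ → ℝ} {L : ℕ → Bool} {n : ℕ} (hadm : Adm U V f A B t L n) :
    Word U V τ f A B = wrd τ f t L n := by
  have hex : ∃ q : (ℕ → ℝ) × (ℕ → Bool) × ℕ, Adm U V f A B q.1 q.2.1 q.2.2 :=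
    ⟨⟨t, L, n⟩, hadm⟩
  classical
  rw [Word, dif_pos hex]
  exact wrd_unique hτ hf _ A B _ _ _ _ _ _ rfl hex.choose_spec hadm

lemma exists_adm (hUo : IsOpen U) (hVo : IsOpen V) (hUV : U ∪ V = Set.univ)
    (hf : Continuous f) (hAB : A ≤ B) :
    ∃ (t : ℕ → ℝ) (L : ℕ → Bool) (n : ℕ), Adm U V f A B t L n := by
  have hcov : Set.Icc A B ⊆ ⋃ b : Bool, f ⁻¹' lab U V b := by
    intro x _
    have : f x ∈ U ∪ V := by rw [hUV]; trivial
    rcases this with h | h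
    · exact Set.mem_iUnion.2 ⟨true, h⟩
    · exact Set.mem_iUnion.2 ⟨false, h⟩
  have hopen : ∀ b : Bool, IsOpen (f ⁻¹' lab U V b) := by
    intro b; cases b
    · exact hVo.preimage hf
    · exact hUo.preimage hf
  obtain ⟨δ, hδ, hball⟩ := lebesgue_number_lemma_of_metric isCompact_Icc hopen hcov
  obtain ⟨n₀, hn₀⟩ := exists_nat_gt ((B - A) / δ)
  set n : ℕ := n₀ + 1 with hn
  have hnpos : (0:ℝ) < n := by positivity
  have hlen : (B - A) / n < δ := by
    rw [div_lt_iff₀ hnpos]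
    have h1 : (B - A) / δ < n := by
      refine hn₀.trans_le ?_
      exact_mod_cast Nat.le_succ n₀
    calc B - A = (B - A) / δ * δ := by field_simp
      _ < n * δ := by
          apply mul_lt_mul_of_pos_right h1 hδ
      _ = δ * n := by ring
  have hlen0 : 0 ≤ (B - A) / n := by
    apply div_nonneg (by linarith) hnpos.le
  set step : ℝ := (B - A) / n with hstep
  set t : ℕ → ℝ := fun i => A + i * step with ht
  have htmem : ∀ i : ℕ, i ≤ n → t i ∈ Set.Icc A B := by
    intro i hi
    constructor
    · have : 0 ≤ (i:ℝ) * step := mul_nonneg (Nat.cast_nonneg i) hlen0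
      simp [ht]; linarith
    · have h2 : (i:ℝ) * step ≤ n * step := by
        apply mul_le_mul_of_nonneg_right _ hlen0
        exact_mod_cast hi
      have h3 : (n:ℝ) * step = B - A := by
        rw [hstep]; field_simp
      simp only [ht]; linarith
  have key : ∀ i : ℕ, ∃ b : Bool, i < n →
      ∀ x ∈ Set.Icc (t i) (t (i+1)), f x ∈ lab U V b := by
    intro i
    by_cases hi : i < n
    · obtain ⟨b, hb⟩ := hball (t i) (htmem i hi.le)
      refine ⟨b, fun _ x hx => hb ?_⟩
      have h1 : t (i+1) - t i = step := by simp [ht]; ring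
      have h2 : |x - t i| < δ := by
        rw [abs_of_nonneg (by linarith [hx.1])]
        have := hx.2
        calc x - t i ≤ t (i+1) - t i := by linarith
          _ = step := h1
          _ < δ := hlen
      simpa [Metric.mem_ball, Real.dist_eq] using h2
    · exact ⟨true, fun h => absurd h hi⟩
  choose L hL using key
  refine ⟨t, L, n, ⟨by simp [ht], ?_, ?_, hL⟩⟩
  · have : (n:ℝ) * step = B - A := by rw [hstep]; field_simp
    simp only [ht]; linarith
  · intro i _
    have : (i:ℝ) * step ≤ (i+1 : ℕ) * step := by
      apply mul_le_mul_of_nonneg_right _ hlen0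
      exact_mod_cast Nat.le_succ i
    simp only [ht]; linarith

lemma Word_concat (hτ : ∀ x y : X, JoinedIn (U ∩ V) x y → τ x = τ y)
    (hUo : IsOpen U) (hVo : IsOpen V) (hUV : U ∪ V = Set.univ)
    (hf : Continuous f) {C : ℝ} (hAB : A ≤ B) (hBC : B ≤ C) :
    Word U V τ f A C = Word U V τ f A B * Word U V τ f B C := by
  obtain ⟨t, L, n, h1⟩ := exists_adm hUo hVo hUV hf hAB
  obtain ⟨t', L', m, h2⟩ := exists_adm (f := f) (A := B) (B := C) hUo hVo hUV hf hBC
  set tt : ℕ → ℝ := fun i => if i < n then t i else t' (i - n) with htt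
  set LL : ℕ → Bool := fun i => if i < n then L i else L' (i - n) with hLL
  have htn : ∀ i, i ≤ n → tt i = t i := by
    intro i hi
    rcases Nat.lt_or_ge i n with h | h
    · simp [htt, h]
    · have : i = n := le_antisymm hi h
      simp [htt, this, h1.tn, h2.t0.symm]
  have htshift : ∀ i, tt (n + i) = t' i := by
    intro i; simp [htt, Nat.add_sub_cancel_left]
  have hadm : Adm U V f A C tt LL (n + m) := by
    refine ⟨?_, ?_, ?_, ?_⟩
    · rw [htn 0 (Nat.zero_le n), h1.t0]
    · rw [show n + m = n + m from rfl, htshift m, h2.tn]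
    · intro i hi
      rcases Nat.lt_or_ge i n with h | h
      · rw [htn i h.le, htn (i+1) h]
        exact h1.mono i h
      · obtain ⟨j, rfl⟩ := Nat.exists_eq_add_of_le h
        rw [htshift j, show n + j + 1 = n + (j + 1) from rfl, htshift (j+1)]
        exact h2.mono j (by omega)
    · intro i hi x hx
      rcases Nat.lt_or_ge i n with h | h
      · rw [htn i h.le, htn (i+1) h] at hx
        have : LL i = L i := by simp [hLL, h]
        rw [this]
        exact h1.mem i h x hx
      · obtain ⟨j, rfl⟩ := Nat.exists_eq_add_of_le h
        rw [htshift j, show n + j + 1 = n + (j + 1) from rfl, htshift (j+1)] at hx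
        have : LL (n + j) = L' j := by simp [hLL]
        rw [this]
        exact h2.mem j (by omega) x hx
  rw [Word_eq hτ hf hadm, Word_eq hτ hf h1, Word_eq hτ hf h2, wrd, pword_add]
  congr 1
  · exact pword_congr (fun i hi => by rw [htn i hi]) (fun i hi => by simp [hLL, hi])
  · exact pword_congr (fun i _ => by rw [htshift i]) (fun i _ => by simp [hLL])

lemma Word_affine (hτ : ∀ x y : X, JoinedIn (U ∩ V) x y → τ x = τ y)
    (hUo : IsOpen U) (hVo : IsOpen V) (hUV : U ∪ V = Set.univ)
    (hf : Continuous f) {c r : ℝ} (hr : 0 < r) (hAB : A ≤ B) :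
    Word U V τ (fun x => f (c + r * x)) A B = Word U V τ f (c + r * A) (c + r * B) := by
  have hAB' : c + r * A ≤ c + r * B := by nlinarith
  obtain ⟨t, L, n, h1⟩ := exists_adm (f := f) hUo hVo hUV hf hAB'
  set g : ℝ → X := fun x => f (c + r * x) with hg
  have hgc : Continuous g := by fun_prop
  set tt : ℕ → ℝ := fun i => (t i - c) / r with htt
  have hval : ∀ i, g (tt i) = f (t i) := by
    intro i; simp only [hg, htt]; congr 1; field_simp; ring
  have hadm : Adm U V g A B tt L n := by
    refine ⟨?_, ?_, ?_, ?_⟩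
    · simp only [htt, h1.t0]; field_simp; ring
    · simp only [htt, h1.tn]; field_simp; ring
    · intro i hi
      have := h1.mono i hi
      simp only [htt]
      gcongr
    · intro i hi x hx
      have h3 : c + r * x ∈ Set.Icc (t i) (t (i+1)) := by
        have hcomm : r * x = x * r := mul_comm r x
        constructor
        · have h4 := (div_le_iff₀ hr).mp hx.1
          linarith
        · have h4 := (le_div_iff₀ hr).mp hx.2
          linarith
      exact h1.mem i hi _ h3
  rw [Word_eq hτ hgc hadm, Word_eq hτ hf h1]
  exact pword_congr (fun i _ => by rw [hval]) (fun _ _ => rfl)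

lemma Word_congr_Icc (hτ : ∀ x y : X, JoinedIn (U ∩ V) x y → τ x = τ y)
    (hUo : IsOpen U) (hVo : IsOpen V) (hUV : U ∪ V = Set.univ)
    {g : ℝ → X} (hf : Continuous f) (hg : Continuous g) (hAB : A ≤ B)
    (hfg : ∀ x ∈ Set.Icc A B, f x = g x) :
    Word U V τ f A B = Word U V τ g A B := by
  obtain ⟨t, L, n, h1⟩ := exists_adm hUo hVo hUV hf hAB
  have hsub : ∀ i, i < n → ∀ x ∈ Set.Icc (t i) (t (i+1)), x ∈ Set.Icc A B := by
    intro i hi x hx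
    have ha := h1.t_mem_Icc hi.le
    have hb := h1.t_mem_Icc hi
    exact ⟨ha.1.trans hx.1, hx.2.trans hb.2⟩
  have hadm : Adm U V g A B t L n := by
    refine ⟨h1.t0, h1.tn, h1.mono, ?_⟩
    intro i hi x hx
    rw [← hfg x (hsub i hi x hx)]
    exact h1.mem i hi x hx
  rw [Word_eq hτ hf h1, Word_eq hτ hg hadm]
  refine pword_congr (fun i hi => ?_) (fun _ _ => rfl)
  rw [hfg (t i) (h1.t_mem_Icc hi)]

end WordDef

section Homotopy

variable {U V : Set X} {τ : X → G}

lemma exists_grid (hUo : IsOpen U) (hVo : IsOpen V) (hUV : U ∪ V = Set.univ)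
    {K : ℝ × ℝ → X} (hK : Continuous K) :
    ∃ n : ℕ, 0 < n ∧ ∃ Lab : ℕ → ℕ → Bool, ∀ i j, i < n → j < n →
      ∀ s ∈ Set.Icc ((j:ℝ)/n) (((j:ℝ)+1)/n), ∀ u ∈ Set.Icc ((i:ℝ)/n) (((i:ℝ)+1)/n),
        K (s, u) ∈ lab U V (Lab i j) := by
  have hcov : (Set.Icc (0:ℝ) 1 ×ˢ Set.Icc (0:ℝ) 1) ⊆ ⋃ b : Bool, K ⁻¹' lab U V b := by
    intro q _
    have : K q ∈ U ∪ V := by rw [hUV]; trivial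
    rcases this with h | h
    · exact Set.mem_iUnion.2 ⟨true, h⟩
    · exact Set.mem_iUnion.2 ⟨false, h⟩
  have hopen : ∀ b : Bool, IsOpen (K ⁻¹' lab U V b) := by
    intro b; cases b
    · exact hVo.preimage hK
    · exact hUo.preimage hK
  obtain ⟨δ, hδ, hball⟩ := lebesgue_number_lemma_of_metric
    (isCompact_Icc.prod isCompact_Icc) hopen hcov
  obtain ⟨n₀, hn₀⟩ := exists_nat_gt (1 / δ)
  set n : ℕ := n₀ + 1 with hn
  have hnpos : (0:ℝ) < n := by positivity
  have hlen : 1 / (n:ℝ) < δ := by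
    rw [div_lt_iff₀ hnpos]
    have h1 : 1 / δ < (n:ℝ) := by
      refine hn₀.trans_le ?_
      exact_mod_cast Nat.le_succ n₀
    calc (1:ℝ) = 1 / δ * δ := by field_simp
      _ < n * δ := mul_lt_mul_of_pos_right h1 hδ
      _ = δ * n := by ring
  have hloc : ∀ i j : ℕ, i < n → j < n →
      ∃ b : Bool, ∀ s ∈ Set.Icc ((j:ℝ)/n) (((j:ℝ)+1)/n),
        ∀ u ∈ Set.Icc ((i:ℝ)/n) (((i:ℝ)+1)/n), K (s, u) ∈ lab U V b := by
    intro i j hi hj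
    have hjm : ((j:ℝ)/n, (i:ℝ)/n) ∈ Set.Icc (0:ℝ) 1 ×ˢ Set.Icc (0:ℝ) 1 := by
      constructor <;> constructor
      · positivity
      · rw [div_le_one hnpos]; exact_mod_cast hj.le
      · positivity
      · rw [div_le_one hnpos]; exact_mod_cast hi.le
    obtain ⟨b, hb⟩ := hball _ hjm
    refine ⟨b, fun s hs u hu => hb ?_⟩
    have hd1 : |s - (j:ℝ)/n| < δ := by
      rw [abs_of_nonneg (by linarith [hs.1])]
      have : s - (j:ℝ)/n ≤ 1/n := by
        have := hs.2
        have he : ((j:ℝ)+1)/n - (j:ℝ)/n = 1/n := by field_simp; ring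
        linarith
      linarith
    have hd2 : |u - (i:ℝ)/n| < δ := by
      rw [abs_of_nonneg (by linarith [hu.1])]
      have : u - (i:ℝ)/n ≤ 1/n := by
        have := hu.2
        have he : ((i:ℝ)+1)/n - (i:ℝ)/n = 1/n := by field_simp; ring
        linarith
      linarith
    simp only [Metric.mem_ball, Prod.dist_eq, Real.dist_eq]
    exact max_lt hd1 hd2
  have hloc' : ∀ i j : ℕ, ∃ b : Bool, i < n → j < n →
      ∀ s ∈ Set.Icc ((j:ℝ)/n) (((j:ℝ)+1)/n),
        ∀ u ∈ Set.Icc ((i:ℝ)/n) (((i:ℝ)+1)/n), K (s, u) ∈ lab U V b := by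
    intro i j
    by_cases h : i < n ∧ j < n
    · obtain ⟨b, hb⟩ := hloc i j h.1 h.2
      exact ⟨b, fun _ _ => hb⟩
    · exact ⟨true, fun hi hj => absurd ⟨hi, hj⟩ h⟩
  choose Lab hLab using hloc'
  exact ⟨n, n₀.succ_pos, Lab, fun i j hi hj => hLab i j hi hj⟩

/-- Homotopy invariance of the word. -/
lemma Word_homotopic (hτ : ∀ x y : X, JoinedIn (U ∩ V) x y → τ x = τ y)
    (hUo : IsOpen U) (hVo : IsOpen V) (hUV : U ∪ V = Set.univ)
    {x y : X} (γ δ : Path x y) (h : Path.Homotopic γ δ) :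
    Word U V τ γ.extend 0 1 = Word U V τ δ.extend 0 1 := by
  obtain ⟨H⟩ := h
  set K : ℝ → ℝ → X :=
    fun s u => H (Set.projIcc 0 1 zero_le_one s, Set.projIcc 0 1 zero_le_one u) with hKdef
  have hKc : Continuous (fun q : ℝ × ℝ => K q.1 q.2) := by
    apply H.continuous.comp
    exact (continuous_projIcc.comp continuous_fst).prodMk
      (continuous_projIcc.comp continuous_snd)
  have hrow : ∀ s : ℝ, Continuous (K s) :=
    fun s => hKc.comp (continuous_const.prodMk continuous_id)
  have hK0 : K 0 = γ.extend := by
    funext u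
    simp only [hKdef, Set.projIcc_left]
    rw [show H (⟨0, by norm_num⟩, Set.projIcc 0 1 zero_le_one u)
        = H (0, Set.projIcc 0 1 zero_le_one u) from rfl, H.apply_zero]
    rfl
  have hK1 : K 1 = δ.extend := by
    funext u
    simp only [hKdef, Set.projIcc_right]
    rw [show H (⟨1, by norm_num⟩, Set.projIcc 0 1 zero_le_one u)
        = H (1, Set.projIcc 0 1 zero_le_one u) from rfl, H.apply_one]
    rfl
  have hendpt : ∀ s s' : ℝ, τ (K s 0) = τ (K s' 0) := by
    intro s s'
    have h0 : ∀ s : ℝ, K s 0 = x := by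
      intro s
      simp only [hKdef, Set.projIcc_left]
      exact H.source _
    rw [h0 s, h0 s']
  have hendpt1 : ∀ s s' : ℝ, τ (K s 1) = τ (K s' 1) := by
    intro s s'
    have h0 : ∀ s : ℝ, K s 1 = y := by
      intro s
      simp only [hKdef, Set.projIcc_right]
      exact H.target _
    rw [h0 s, h0 s']
  obtain ⟨n, hnpos, Lab, hLab⟩ := exists_grid hUo hVo hUV hKc
  have hnR : (0:ℝ) < n := by exact_mod_cast hnpos
  set T : ℕ → ℝ := fun i => (i:ℝ)/n with hT
  have hTcast : ∀ i : ℕ, T (i+1) = ((i:ℝ)+1)/n := by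
    intro i; simp only [hT]; push_cast; ring
  have hadmrow : ∀ j s, j < n → s ∈ Set.Icc ((j:ℝ)/n) (((j:ℝ)+1)/n) →
      Adm U V (K s) 0 1 T (fun i => Lab i j) n := by
    intro j s hj hs
    refine ⟨by simp [hT], by simp only [hT]; exact div_self hnR.ne', ?_, ?_⟩
    · intro i _
      rw [hTcast i]
      simp only [hT]
      gcongr
      linarith
    · intro i hi u hu
      rw [hTcast i] at hu
      exact hLab i j hi hj s hs u hu
  have hstep : ∀ j, j < n → Word U V τ (K ((j:ℝ)/n)) 0 1
      = Word U V τ (K (((j:ℝ)+1)/n)) 0 1 := by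
    intro j hj
    have hdivle : ((j:ℝ)/n) ≤ ((j:ℝ)+1)/n := by gcongr; linarith
    have hsl : ((j:ℝ)/n) ∈ Set.Icc ((j:ℝ)/n) (((j:ℝ)+1)/n) := ⟨le_refl _, hdivle⟩
    have hsr : (((j:ℝ)+1)/n) ∈ Set.Icc ((j:ℝ)/n) (((j:ℝ)+1)/n) := ⟨hdivle, le_refl _⟩
    have hadm1 := hadmrow j _ hj hsl
    have hadm2 := hadmrow j _ hj hsr
    rw [Word_eq hτ (hrow _) hadm1, Word_eq hτ (hrow _) hadm2]
    apply pword_invar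
    · -- left endpoints agree
      have : T 0 = 0 := by simp [hT]
      rw [this]
      exact hendpt _ _
    · -- right endpoints agree
      have : T n = 1 := by simp only [hT]; exact div_self hnR.ne'
      rw [this]
      exact hendpt1 _ _
    · -- transition points: vertical edge lies in U ∩ V
      intro i hi0 hin hLne
      obtain ⟨k, rfl⟩ : ∃ k, i = k + 1 := ⟨i - 1, by omega⟩
      simp only [Nat.add_sub_cancel] at hLne
      have hkn : k < n := by omega
      have hedge : ∀ s ∈ Set.Icc ((j:ℝ)/n) (((j:ℝ)+1)/n), K s (T (k+1)) ∈ U ∩ V := by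
        intro s hs
        have hu1 : T (k+1) ∈ Set.Icc ((k:ℝ)/n) (((k:ℝ)+1)/n) := by
          rw [hTcast k]
          exact ⟨by gcongr; linarith, le_refl _⟩
        have hu2 : T (k+1) ∈ Set.Icc (((k+1:ℕ):ℝ)/n) ((((k+1:ℕ):ℝ)+1)/n) := by
          constructor
          · rw [hTcast k]; push_cast; exact le_refl _
          · rw [hTcast k]; push_cast; gcongr <;> linarith
        have m1 := hLab k j hkn hj s hs _ hu1
        have m2 := hLab (k+1) j hin hj s hs _ hu2
        exact mem_lab_both m1 m2 hLne
      have hjoin : JoinedIn (U ∩ V) (K ((j:ℝ)/n) (T (k+1))) (K (((j:ℝ)+1)/n) (T (k+1))) := by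
        have hcont : Continuous (fun s : ℝ => K s (T (k+1))) :=
          hKc.comp (continuous_id.prodMk continuous_const)
        exact joinedIn_of_icc hcont hdivle (fun s hs => hedge s hs)
      exact hτ _ _ hjoin
  -- iterate over rows
  have hiter : ∀ j : ℕ, j ≤ n → Word U V τ (K 0) 0 1 = Word U V τ (K ((j:ℝ)/n)) 0 1 := by
    intro j hj
    induction j with
    | zero => norm_num
    | succ k ih =>
      have hkn : k < n := by omega
      rw [ih hkn.le, hstep k hkn]
      norm_num
  have hfin := hiter n le_rfl
  rw [show ((n:ℝ)/n) = 1 by field_simp] at hfin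
  rw [← hK0, ← hK1, hfin]

end Homotopy

section Paths

variable {U V : Set X} {τ : X → G}
variable (hτ : ∀ x y : X, JoinedIn (U ∩ V) x y → τ x = τ y)
variable (hUo : IsOpen U) (hVo : IsOpen V) (hUV : U ∪ V = Set.univ)

/-- the two-point scheme `0, 1` with a single label. -/
lemma adm_single {f : ℝ → X} {b : Bool} (hmem : ∀ x ∈ Set.Icc (0:ℝ) 1, f x ∈ lab U V b) :
    Adm U V f 0 1 (fun i => if i = 0 then 0 else 1) (fun _ => b) 1 := by
  refine ⟨by simp, by simp, ?_, ?_⟩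
  · intro i hi
    interval_cases i
    simp
  · intro i hi x hx
    interval_cases i
    simp only [if_pos rfl, if_neg one_ne_zero] at hx
    exact hmem x hx

include hτ in
lemma Word_of_mem_U {x y : X} (γ : Path x y) (hU : ∀ t, γ t ∈ U) :
    Word U V τ γ.extend 0 1 = 1 := by
  have hmem : ∀ u ∈ Set.Icc (0:ℝ) 1, γ.extend u ∈ lab U V true := by
    intro u hu
    rw [γ.extend_apply hu]
    exact hU _
  rw [Word_eq hτ γ.continuous_extend (adm_single hmem)]
  simp [wrd, pword]

include hτ in
lemma Word_of_mem_V {x y : X} (γ : Path x y) (hV : ∀ t, γ t ∈ V) :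
    Word U V τ γ.extend 0 1 = τ x * (τ y)⁻¹ := by
  have hmem : ∀ u ∈ Set.Icc (0:ℝ) 1, γ.extend u ∈ lab U V false := by
    intro u hu
    rw [γ.extend_apply hu]
    exact hV _
  rw [Word_eq hτ γ.continuous_extend (adm_single hmem), wrd, show (1:ℕ) = 0 + 1 from rfl,
    pword_succ]
  simp

include hτ in
lemma Word_refl {x : X} (hx : x ∈ U) :
    Word U V τ (Path.refl x).extend 0 1 = 1 := by
  apply Word_of_mem_U hτ
  intro t
  exact hx

include hτ hUo hVo hUV in
lemma Word_trans {x y z : X} (γ : Path x y) (δ : Path y z) :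
    Word U V τ (γ.trans δ).extend 0 1
      = Word U V τ γ.extend 0 1 * Word U V τ δ.extend 0 1 := by
  have h2 : (0:ℝ) ≤ 1/2 := by norm_num
  have h2' : (1:ℝ)/2 ≤ 1 := by norm_num
  rw [Word_concat hτ hUo hVo hUV (γ.trans δ).continuous_extend h2 h2']
  congr 1
  · -- left half is γ reparametrized
    have hcg : Continuous (fun u : ℝ => γ.extend (0 + 2 * u)) := by fun_prop
    have he : ∀ u ∈ Set.Icc (0:ℝ) (1/2), (γ.trans δ).extend u = γ.extend (0 + 2 * u) := by
      intro u hu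
      have hu1 : u ∈ Set.Icc (0:ℝ) 1 := ⟨hu.1, hu.2.trans h2'⟩
      rw [Path.extend_apply _ hu1, Path.trans_apply]
      have : (⟨u, hu1⟩ : unitInterval) ≤ (⟨1/2, by norm_num⟩ : unitInterval)  := hu.2
      rw [dif_pos hu.2]
      rw [γ.extend_apply (by constructor <;> [linarith [hu.1]; linarith [hu.2]])]
      congr 1
      ring_nf
    rw [Word_congr_Icc hτ hUo hVo hUV (γ.trans δ).continuous_extend hcg h2 he,
      Word_affine hτ hUo hVo hUV γ.continuous_extend (by norm_num : (0:ℝ) < 2) h2]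
    norm_num
  · -- right half is δ reparametrized
    have hcg : Continuous (fun u : ℝ => δ.extend (-1 + 2 * u)) := by fun_prop
    have he : ∀ u ∈ Set.Icc (1/2:ℝ) 1, (γ.trans δ).extend u = δ.extend (-1 + 2 * u) := by
      intro u hu
      have hu1 : u ∈ Set.Icc (0:ℝ) 1 := ⟨le_trans h2 hu.1, hu.2⟩
      rw [Path.extend_apply _ hu1, Path.trans_apply]
      rcases le_or_gt u (1/2) with hle | hlt
      · have huv : u = 1/2 := le_antisymm hle hu.1
        subst huv
        norm_num
      · rw [dif_neg (by exact_mod_cast hlt.not_ge)]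
        rw [δ.extend_apply (by constructor <;> [linarith [hu.1]; linarith [hu.2]])]
        congr 1
        ring_nf
    rw [Word_congr_Icc hτ hUo hVo hUV (γ.trans δ).continuous_extend hcg h2' he,
      Word_affine hτ hUo hVo hUV δ.continuous_extend (by norm_num : (0:ℝ) < 2) h2']
    norm_num

end Paths

section Rho

open CategoryTheory

attribute [local instance] Path.Homotopic.setoid

variable {U V : Set X} {τ : X → G}
variable (hτ : ∀ x y : X, JoinedIn (U ∩ V) x y → τ x = τ y)
variable (hUo : IsOpen U) (hVo : IsOpen V) (hUV : U ∪ V = Set.univ)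
variable {p : X} (hpU : p ∈ U)

/-- The word invariant on homotopy classes of loops. -/
noncomputable def rhoQ (hτ : ∀ x y : X, JoinedIn (U ∩ V) x y → τ x = τ y)
    (hUo : IsOpen U) (hVo : IsOpen V) (hUV : U ∪ V = Set.univ) {x y : X}
    (q : Path.Homotopic.Quotient x y) : G :=
  Quotient.liftOn q (fun γ => Word U V τ γ.extend 0 1)
    (fun γ δ h => Word_homotopic hτ hUo hVo hUV γ δ h)

@[simp] lemma rhoQ_mk {x y : X} (γ : Path x y) :
    rhoQ hτ hUo hVo hUV (⟦γ⟧ : Path.Homotopic.Quotient x y) = Word U V τ γ.extend 0 1 := rfl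

lemma rhoQ_comp {x y z : X} (q : Path.Homotopic.Quotient x y)
    (q' : Path.Homotopic.Quotient y z) :
    rhoQ hτ hUo hVo hUV (q.trans q') = rhoQ hτ hUo hVo hUV q * rhoQ hτ hUo hVo hUV q' := by
  refine Quotient.inductionOn₂ q q' (fun γ δ => ?_)
  show Word U V τ (γ.trans δ).extend 0 1 = Word U V τ γ.extend 0 1 * Word U V τ δ.extend 0 1
  exact Word_trans hτ hUo hVo hUV γ δ

include hpU in
lemma rhoQ_id :
    rhoQ hτ hUo hVo hUV (⟦Path.refl p⟧ : Path.Homotopic.Quotient p p) = 1 := by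
  rw [rhoQ_mk]
  exact Word_refl hτ hpU

/-- The word invariant as a group homomorphism on the fundamental group. -/
noncomputable def rhoHom (hτ : ∀ x y : X, JoinedIn (U ∩ V) x y → τ x = τ y)
    (hUo : IsOpen U) (hVo : IsOpen V) (hUV : U ∪ V = Set.univ)
    (p : X) (hpU : p ∈ U) : FundamentalGroup X p →* G where
  toFun g := (rhoQ hτ hUo hVo hUV
    (show Path.Homotopic.Quotient p p from FundamentalGroup.toPath g))⁻¹
  map_one' := by
    have h1 : (rhoQ hτ hUo hVo hUV (⟦Path.refl p⟧ : Path.Homotopic.Quotient p p))⁻¹ = 1 := by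
      rw [rhoQ_id hτ hUo hVo hUV hpU, inv_one]
    exact h1
  map_mul' g h := by
    show (rhoQ hτ hUo hVo hUV
        ((show Path.Homotopic.Quotient p p from FundamentalGroup.toPath h).trans
          (show Path.Homotopic.Quotient p p from FundamentalGroup.toPath g)))⁻¹ = _
    rw [rhoQ_comp hτ hUo hVo hUV, mul_inv_rev]

lemma rhoHom_apply (p : X) (hpU : p ∈ U) (γ : Path p p) :
    rhoHom hτ hUo hVo hUV p hpU
      (FundamentalGroup.fromPath
        (⟦γ⟧ : Path.Homotopic.Quotient p p)) = (Word U V τ γ.extend 0 1)⁻¹ := rfl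

end Rho

end VKWord


open VKWord


/-- If `X = U ∪ V` with `U`, `V` open and path-connected and `W = U ∩ V` has at least
three path-components (witnessed by a set `J` meeting each path-component of `W` in
exactly one point and having at least three elements), then for any basepoint `p ∈ J`
the fundamental group of `X` has a free group of rank 2 as a retract; in particular it
is nonabelian. -/
theorem fundamentalGroup_retract_free_rank_two {X : Type*} [TopologicalSpace X]
    (U V : Set X) (hUopen : IsOpen U) (hVopen : IsOpen V)
    (hUV : U ∪ V = Set.univ)
    (hUpc : IsPathConnected U) (hVpc : IsPathConnected V)
    (J : Set X) (hJW : J ⊆ U ∩ V)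
    (hJmeets : ∀ w ∈ U ∩ V, ∃! x, x ∈ J ∧ JoinedIn (U ∩ V) w x)
    (a b c : X) (ha : a ∈ J) (hb : b ∈ J) (hc : c ∈ J)
    (hab : a ≠ b) (hac : a ≠ c) (hbc : b ≠ c)
    (p : X) (hp : p ∈ J) :
    (∃ (ι : FreeGroup (Fin 2) →* FundamentalGroup X p)
       (ρ : FundamentalGroup X p →* FreeGroup (Fin 2)),
        ρ.comp ι = MonoidHom.id (FreeGroup (Fin 2))) ∧
    ∃ g h : FundamentalGroup X p, g * h ≠ h * g := by
  classical
  -- choose two distinguished points of `J` distinct from `p`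
  obtain ⟨b', c', hb'J, hc'J, hb'c', hpb', hpc'⟩ :
      ∃ b' c', b' ∈ J ∧ c' ∈ J ∧ b' ≠ c' ∧ p ≠ b' ∧ p ≠ c' := by
    by_cases hpa : p = a
    · exact ⟨b, c, hb, hc, hbc, hpa ▸ hab, hpa ▸ hac⟩
    by_cases hpb : p = b
    · exact ⟨a, c, ha, hc, hac, fun h => hab (h.symm.trans hpb), fun h => hbc (hpb.symm.trans h)⟩
    · exact ⟨a, b, ha, hb, hab, hpa, hpb⟩
  -- the retraction of `W = U ∩ V` onto `J`
  set W : Set X := U ∩ V with hW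
  set rm : X → X := fun w => if h : w ∈ W then (hJmeets w h).choose else w with hrm
  have hrm_spec : ∀ w (h : w ∈ W), rm w ∈ J ∧ JoinedIn W w (rm w) := by
    intro w h
    simp only [hrm, dif_pos h]
    exact (hJmeets w h).choose_spec.1
  have hrm_eq : ∀ w (h : w ∈ W) x, x ∈ J → JoinedIn W w x → rm w = x := by
    intro w h x hx hj
    simp only [hrm, dif_pos h]
    exact ((hJmeets w h).choose_spec.2 x ⟨hx, hj⟩).symm
  have hrm_fix : ∀ x, x ∈ J → rm x = x := by
    intro x hx
    exact hrm_eq x (hJW hx) x hx (JoinedIn.refl (hJW hx))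
  have hrm_const : ∀ w w', JoinedIn W w w' → rm w = rm w' := by
    intro w w' hj
    have h' : w' ∈ W := hj.target_mem
    exact hrm_eq w hj.source_mem (rm w') (hrm_spec w' h').1
      (hj.trans (hrm_spec w' h').2)
  -- the letter function
  set base : X → FreeGroup (Fin 2) :=
    fun q => if q = b' then FreeGroup.of 0 else if q = c' then FreeGroup.of 1 else 1
    with hbase
  set τ : X → FreeGroup (Fin 2) := fun w => if w ∈ W then base (rm w) else 1 with hτdef
  have hτ : ∀ x y : X, JoinedIn (U ∩ V) x y → τ x = τ y := by
    intro x y hj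
    simp only [hτdef, if_pos (hW ▸ hj.source_mem), if_pos (hW ▸ hj.target_mem)]
    rw [hrm_const x y hj]
  have hτJ : ∀ x, x ∈ J → τ x = base x := by
    intro x hx
    simp only [hτdef, if_pos (hW ▸ hJW hx), hrm_fix x hx]
    exact if_pos (hJW hx)
  have hτp : τ p = 1 := by
    rw [hτJ p hp, hbase]
    simp [hpb', hpc']
  have hτb' : τ b' = FreeGroup.of 0 := by
    rw [hτJ b' hb'J, hbase]; simp
  have hτc' : τ c' = FreeGroup.of 1 := by
    rw [hτJ c' hc'J, hbase]
    simp [hb'c'.symm]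
  -- membership facts
  have hpU : p ∈ U := (hJW hp).1
  have hpV : p ∈ V := (hJW hp).2
  have hb'U : b' ∈ U := (hJW hb'J).1
  have hb'V : b' ∈ V := (hJW hb'J).2
  have hc'U : c' ∈ U := (hJW hc'J).1
  have hc'V : c' ∈ V := (hJW hc'J).2
  -- loops through b' and c'
  obtain ⟨γVb, hγVb⟩ : JoinedIn V p b' := hVpc.joinedIn p hpV b' hb'V
  obtain ⟨γUb, hγUb⟩ : JoinedIn U b' p := hUpc.joinedIn b' hb'U p hpU
  obtain ⟨γVc, hγVc⟩ : JoinedIn V p c' := hVpc.joinedIn p hpV c' hc'V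
  obtain ⟨γUc, hγUc⟩ : JoinedIn U c' p := hUpc.joinedIn c' hc'U p hpU
  set loopb : Path p p := γVb.trans γUb with hloopb
  set loopc : Path p p := γVc.trans γUc with hloopc
  have hWb : Word U V τ loopb.extend 0 1 = (FreeGroup.of 0)⁻¹ := by
    rw [hloopb, Word_trans hτ hUopen hVopen hUV,
      Word_of_mem_V hτ γVb hγVb, Word_of_mem_U hτ γUb hγUb, hτp, hτb']
    group
  have hWc : Word U V τ loopc.extend 0 1 = (FreeGroup.of 1)⁻¹ := by
    rw [hloopc, Word_trans hτ hUopen hVopen hUV,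
      Word_of_mem_V hτ γVc hγVc, Word_of_mem_U hτ γUc hγUc, hτp, hτc']
    group
  -- the retraction and section
  letI := Path.Homotopic.setoid p p
  set ρ : FundamentalGroup X p →* FreeGroup (Fin 2) :=
    rhoHom hτ hUopen hVopen hUV p hpU with hρ
  set gb : FundamentalGroup X p :=
    FundamentalGroup.fromPath (⟦loopb⟧ : Path.Homotopic.Quotient p p) with hgb
  set gc : FundamentalGroup X p :=
    FundamentalGroup.fromPath (⟦loopc⟧ : Path.Homotopic.Quotient p p) with hgc
  have hρgb : ρ gb = FreeGroup.of 0 := by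
    rw [hρ, hgb, rhoHom_apply hτ hUopen hVopen hUV p hpU loopb, hWb, inv_inv]
  have hρgc : ρ gc = FreeGroup.of 1 := by
    rw [hρ, hgc, rhoHom_apply hτ hUopen hVopen hUV p hpU loopc, hWc, inv_inv]
  set ι : FreeGroup (Fin 2) →* FundamentalGroup X p :=
    FreeGroup.lift (fun i : Fin 2 => if i = 0 then gb else gc) with hι
  constructor
  · refine ⟨ι, ρ, ?_⟩
    apply FreeGroup.ext_hom
    intro i
    rw [MonoidHom.comp_apply, MonoidHom.id_apply, hι, FreeGroup.lift_apply_of]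
    fin_cases i
    · simpa using hρgb
    · simpa using hρgc
  · refine ⟨gb, gc, fun hcomm => ?_⟩
    have h1 : FreeGroup.of (0 : Fin 2) * FreeGroup.of 1
        = FreeGroup.of 1 * FreeGroup.of 0 := by
      have := congrArg ρ hcomm
      rwa [map_mul, map_mul, hρgb, hρgc] at this
    have h2 := congrArg (FreeGroup.lift (fun i : Fin 2 =>
      if i = 0 then Equiv.swap (0 : Fin 3) 1 else Equiv.swap 1 2)) h1
    rw [map_mul, map_mul, FreeGroup.lift_apply_of, FreeGroup.lift_apply_of] at h2
    simp only [if_pos rfl, if_neg (by decide : (1 : Fin 2) ≠ 0)] at h2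
    exact absurd h2 (by decide)
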